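/- Let n ≥ 2 and let V ⊂ ℝ^d be a finite vocabulary with r_min < ‖v‖₂ < r_max for all v ∈ V and ‖v − v'‖₂ > η for distinct v, v' ∈ V, with r_min > 0. Let (X^(1), p^(1)), …, (X^(M), p^(M)) ∈ ℝ^{d×n} × ℝ^{|V|} be pairs such that: the columns of each X^(i) lie in V; each X^(i) has pairwise distinct columns; the column sets {X^(i)_{:,1}, …, X^(i)_{:,n}} are pairwise distinct across i ∈ [M]; and each label p^(i) is a strictly positive probability vector (p^(i)_k > 0 for all k and Σ_k p^(i)_k = 1). Then there exist a single-head masked softmax self-attention layer F_SA : ℝ^{d×n} → ℝ^{d×n} and a two-layer ReLU feed-forward network f : ℝ^d → ℝ^{|V|} of hidden width at most (2M + d)|V| such that for every i ∈ [M], σ_S( f( F_SA(X^(i))_{:,n} ) ) = p^(i), where σ_S is the softmax function on ℝ^{|V|}. That is, a one-block Transformer with a single attention head exactly memorizes the M history–distribution pairs. -/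

import Mathlib

open Finset Filter Topology MeasureTheory


section Helpers

lemma exists_functional' {d : ℕ} {ι : Type*} (T : Finset ι) (v : ι → (Fin d → ℝ))
    (h0 : ∀ i ∈ T, v i ≠ 0) :
    ∃ a : Fin d → ℝ, ∀ i ∈ T, ∑ b, a b * v i b ≠ 0 := by
  classical
  have hker : ∀ i ∈ T, (volume : Measure (Fin d → ℝ)) {a | ∑ b, a b * v i b = 0} = 0 := by
    intro i hi
    set f : (Fin d → ℝ) →ₗ[ℝ] ℝ := ∑ b, v i b • (LinearMap.proj b) with hf
    have hfa : ∀ a, f a = ∑ b, a b * v i b := by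
      intro a
      simp [hf, LinearMap.sum_apply, mul_comm]
    have hne : LinearMap.ker f ≠ ⊤ := by
      intro h
      apply h0 i hi
      funext b
      have := LinearMap.ext_iff.mp (LinearMap.ker_eq_top.mp h) (Pi.single b 1)
      simp [hfa, Pi.single_apply] at this
      simpa using this
    have : {a : Fin d → ℝ | ∑ b, a b * v i b = 0} = (LinearMap.ker f : Set _) := by
      ext a; simp [LinearMap.mem_ker, hfa]
    rw [this]
    exact Measure.addHaar_submodule _ _ hne
  have hU : (volume : Measure (Fin d → ℝ)) (⋃ i ∈ T, {a | ∑ b, a b * v i b = 0}) = 0 :=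
    (measure_biUnion_null_iff T.countable_toSet).mpr hker
  have hne : ((⋃ i ∈ T, {a : Fin d → ℝ | ∑ b, a b * v i b = 0}) : Set _) ≠ Set.univ := by
    intro h
    have huniv : (volume : Measure (Fin d → ℝ)) Set.univ ≠ 0 :=
      (isOpen_univ.measure_ne_zero volume ⟨0, trivial⟩)
    rw [h] at hU
    exact huniv hU
  obtain ⟨a, ha⟩ := Set.ne_univ_iff_exists_notMem _ |>.mp hne
  exact ⟨a, fun i hi hvi => ha (Set.mem_biUnion hi hvi)⟩

lemma relu_interp {M K : ℕ} (s : Fin M → ℝ) (hs : Function.Injective s)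
    (Y : Fin M → Fin K → ℝ) :
    ∃ (t : Fin M → ℝ) (W : Fin K → Fin M → ℝ),
      ∀ i v, ∑ j, W v j * max (s i - t j) 0 = Y i v := by
  classical
  set G : Finset ℝ := insert 1 ((univ.filter (fun p : Fin M × Fin M => p.1 ≠ p.2)).image
    (fun p => |s p.1 - s p.2|)) with hG
  have hGne : G.Nonempty := ⟨1, by simp [hG]⟩
  set δ : ℝ := G.min' hGne with hδdef
  have hδpos : 0 < δ := by
    have hpos : ∀ x ∈ G, 0 < x := by
      intro x hx
      rw [hG] at hx
      simp only [mem_insert, mem_image, mem_filter] at hx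
      rcases hx with h | ⟨p, ⟨_, hp⟩, h⟩
      · rw [h]; norm_num
      · rw [← h]
        exact abs_pos.mpr (sub_ne_zero.mpr (fun hc => hp (hs hc)))
    exact hpos _ (G.min'_mem hGne)
  have hδle : ∀ i j : Fin M, i ≠ j → δ ≤ |s i - s j| := by
    intro i j hij
    apply G.min'_le
    rw [hG]
    exact mem_insert_of_mem (mem_image.mpr ⟨(i, j), by simp [hij], rfl⟩)
  set A : Matrix (Fin M) (Fin M) ℝ := fun i j => max (s i - (s j - δ)) 0 with hA
  have hdet : A.det ≠ 0 := by
    have hsub : (A.submatrix (Tuple.sort s) (Tuple.sort s)).det = A.det :=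
      Matrix.det_submatrix_equiv_self _ _
    set B := A.submatrix (Tuple.sort s) (Tuple.sort s) with hB
    have htri : B.BlockTriangular OrderDual.toDual := by
      intro i j hij
      have hij' : (i : Fin M) < j := hij
      have hmono := Tuple.monotone_sort s (le_of_lt hij')
      have hne : Tuple.sort s i ≠ Tuple.sort s j := fun h => hij'.ne ((Tuple.sort s).injective h)
      have hlt : s (Tuple.sort s i) < s (Tuple.sort s j) :=
        lt_of_le_of_ne hmono (fun h => hne (hs h))
      have hd := hδle _ _ hne
      rw [abs_of_neg (by linarith)] at hd
      show max (s (Tuple.sort s i) - (s (Tuple.sort s j) - δ)) 0 = 0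
      rw [max_eq_right]; linarith
    rw [← hsub, Matrix.det_of_lowerTriangular _ htri]
    have : ∀ i, B i i = δ := by
      intro i; show max (_ - (_ - δ)) 0 = δ
      rw [sub_sub_cancel, max_eq_left hδpos.le]
    rw [Finset.prod_congr rfl (fun i _ => this i)]
    positivity
  refine ⟨fun j => s j - δ, fun v => A⁻¹.mulVec (fun i => Y i v), fun i v => ?_⟩
  have : A.mulVec (A⁻¹.mulVec (fun i => Y i v)) = fun i => Y i v := by
    rw [Matrix.mulVec_mulVec, Matrix.mul_nonsing_inv _ (isUnit_iff_ne_zero.mpr hdet),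
      Matrix.one_mulVec]
  have := congrFun this i
  rw [Matrix.mulVec] at this
  simpa [dotProduct, hA, mul_comm] using this

noncomputable def uE (A : Finset ℝ) (s : ℝ) : ℝ := ∑ α ∈ A, Real.exp (s * α)
noncomputable def nE (A : Finset ℝ) (s : ℝ) : ℝ := ∑ α ∈ A, α * Real.exp (s * α)
noncomputable def PP (A B : Finset ℝ) (s : ℝ) : ℝ := nE A s * uE B s - nE B s * uE A s

lemma uE_pos {A : Finset ℝ} (hA : A.Nonempty) (s : ℝ) : 0 < uE A s :=
  Finset.sum_pos (fun _ _ => Real.exp_pos _) hA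

lemma hasDerivAt_uE (A : Finset ℝ) (s : ℝ) : HasDerivAt (uE A) (nE A s) s := by
  apply HasDerivAt.fun_sum
  intro α _
  simpa [mul_comm, Function.comp_def] using ((Real.hasDerivAt_exp (s * α)).comp s (hasDerivAt_mul_const α))

lemma analytic_uE (A : Finset ℝ) : AnalyticOnNhd ℝ (uE A) Set.univ := by
  apply Finset.analyticOnNhd_fun_sum
  intro α _
  exact analyticOnNhd_rexp.comp (analyticOnNhd_id.mul analyticOnNhd_const) (Set.mapsTo_univ _ _)

lemma analytic_nE (A : Finset ℝ) : AnalyticOnNhd ℝ (nE A) Set.univ := by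
  apply Finset.analyticOnNhd_fun_sum
  intro α _
  exact analyticOnNhd_const.mul
    (analyticOnNhd_rexp.comp (analyticOnNhd_id.mul analyticOnNhd_const) (Set.mapsTo_univ _ _))

lemma analytic_PP (A B : Finset ℝ) : AnalyticOnNhd ℝ (PP A B) Set.univ :=
  ((analytic_nE A).mul (analytic_uE B)).sub ((analytic_nE B).mul (analytic_uE A))

lemma uE_ne_aux {C D : Finset ℝ} {α0 : ℝ} (hC : α0 ∈ C)
    (hCle : ∀ α ∈ C, α ≤ α0) (hDlt : ∀ α ∈ D, α < α0) :
    ∃ s, uE C s ≠ uE D s := by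
  have hterm : ∀ (α : ℝ), α < α0 →
      Tendsto (fun s => Real.exp (s * α) * Real.exp (-(s * α0))) atTop (𝓝 0) := by
    intro α hα
    have heq : ∀ s : ℝ, Real.exp (s * α) * Real.exp (-(s * α0)) = Real.exp (s * (α - α0)) := by
      intro s; rw [← Real.exp_add]; ring_nf
    simp_rw [heq]
    have hlin : Tendsto (fun s : ℝ => s * (α - α0)) atTop atBot :=
      tendsto_id.atTop_mul_const_of_neg (by linarith)
    exact Real.tendsto_exp_atBot.comp hlin
  have hconst : ∀ s : ℝ, Real.exp (s * α0) * Real.exp (-(s * α0)) = 1 := by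
    intro s; rw [← Real.exp_add, add_neg_cancel, Real.exp_zero]
  have hCsum : Tendsto (fun s => ∑ α ∈ C, Real.exp (s * α) * Real.exp (-(s * α0)))
      atTop (𝓝 (∑ α ∈ C, if α = α0 then (1:ℝ) else 0)) := by
    apply tendsto_finset_sum
    intro α hα
    rcases eq_or_lt_of_le (hCle α hα) with h | h
    · subst h
      simp only [if_pos rfl]
      simp_rw [hconst]
      exact tendsto_const_nhds
    · simp only [if_neg h.ne]
      exact hterm α h
  have hDsum : Tendsto (fun s => ∑ α ∈ D, Real.exp (s * α) * Real.exp (-(s * α0)))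
      atTop (𝓝 0) := by
    have : Tendsto (fun s => ∑ α ∈ D, Real.exp (s * α) * Real.exp (-(s * α0)))
        atTop (𝓝 (∑ α ∈ D, (0:ℝ))) :=
      tendsto_finset_sum _ (fun α hα => hterm α (hDlt α hα))
    simpa using this
  have hCval : (∑ α ∈ C, if α = α0 then (1:ℝ) else 0) = 1 := by
    rw [Finset.sum_ite_eq' C α0 (fun _ => (1:ℝ))]
    simp [hC]
  have key : Tendsto (fun s => (uE C s - uE D s) * Real.exp (-(s * α0))) atTop (𝓝 1) := by
    have := hCsum.sub hDsum
    rw [hCval, sub_zero] at this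
    convert this using 2 with s
    rw [uE, uE, sub_mul, Finset.sum_mul, Finset.sum_mul]
  rcases (key.eventually_ne one_ne_zero).exists with ⟨s, hs⟩
  refine ⟨s, fun h => hs ?_⟩
  rw [h, sub_self, zero_mul]

lemma uE_ne {A B : Finset ℝ} (hne : A ≠ B) : ∃ s, uE A s ≠ uE B s := by
  classical
  have hCD : (A \ B) ∪ (B \ A) ≠ ∅ := by
    intro h
    apply hne
    have h1 : A \ B = ∅ := Finset.union_eq_empty.mp h |>.1
    have h2 : B \ A = ∅ := Finset.union_eq_empty.mp h |>.2
    exact Finset.Subset.antisymm (Finset.sdiff_eq_empty_iff_subset.mp h1)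
      (Finset.sdiff_eq_empty_iff_subset.mp h2)
  have hCDne : ((A \ B) ∪ (B \ A)).Nonempty := Finset.nonempty_of_ne_empty hCD
  set α0 := ((A \ B) ∪ (B \ A)).max' hCDne with hα0
  have hmem := ((A \ B) ∪ (B \ A)).max'_mem hCDne
  have hle : ∀ α ∈ (A \ B) ∪ (B \ A), α ≤ α0 := fun α hα => Finset.le_max' _ α hα
  have hdiff : ∀ s, uE A s - uE B s = uE (A \ B) s - uE (B \ A) s := by
    intro s
    have hA' : uE A s = uE (A \ B) s + ∑ α ∈ A ∩ B, Real.exp (s * α) := by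
      rw [uE, uE, ← Finset.sum_union (Finset.disjoint_sdiff_inter A B)]
      congr 1
      rw [Finset.sdiff_union_inter]
    have hB' : uE B s = uE (B \ A) s + ∑ α ∈ B ∩ A, Real.exp (s * α) := by
      rw [uE, uE, ← Finset.sum_union (Finset.disjoint_sdiff_inter B A)]
      congr 1
      rw [Finset.sdiff_union_inter]
    rw [hA', hB', show B ∩ A = A ∩ B from Finset.inter_comm B A]; ring
  rcases Finset.mem_union.mp hmem with h | h
  · obtain ⟨s, hs⟩ := uE_ne_aux h
      (fun α hα => hle α (Finset.mem_union_left _ hα))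
      (fun α hα => lt_of_le_of_ne (hle α (Finset.mem_union_right _ hα))
        (fun hc => (Finset.mem_sdiff.mp h).2 (hc ▸ (Finset.mem_sdiff.mp hα).1)))
    exact ⟨s, fun hc => hs (by have := hdiff s; rw [hc, sub_self] at this; linarith)⟩
  · obtain ⟨s, hs⟩ := uE_ne_aux h
      (fun α hα => hle α (Finset.mem_union_right _ hα))
      (fun α hα => lt_of_le_of_ne (hle α (Finset.mem_union_left _ hα))
        (fun hc => (Finset.mem_sdiff.mp h).2 (hc ▸ (Finset.mem_sdiff.mp hα).1)))
    exact ⟨s, fun hc => hs (by have := hdiff s; rw [hc, sub_self] at this; linarith)⟩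

lemma PP_ne {A B : Finset ℝ} (hB : B.Nonempty)
    (hcard : A.card = B.card) (hne : A ≠ B) : ∃ s, PP A B s ≠ 0 := by
  by_contra hc
  push_neg at hc
  set q : ℝ → ℝ := fun s => uE A s / uE B s with hq
  have hderiv : ∀ x : ℝ, HasDerivAt q 0 x := by
    intro x
    have h := (hasDerivAt_uE A x).div (hasDerivAt_uE B x) (uE_pos hB x).ne'
    have : (nE A x * uE B x - uE A x * nE B x) / uE B x ^ 2 = 0 := by
      have := hc x
      rw [PP] at this
      rw [div_eq_zero_iff]
      left
      linarith
    rwa [this] at h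
  have hconst : ∀ s : ℝ, q s = q 0 := by
    intro s
    exact is_const_of_deriv_eq_zero (fun x => (hderiv x).differentiableAt)
      (fun x => (hderiv x).deriv) s 0
  have hq0 : q 0 = 1 := by
    rw [hq]
    simp only [uE, zero_mul, Real.exp_zero]
    rw [Finset.sum_const, Finset.sum_const, nsmul_eq_mul, nsmul_eq_mul, mul_one, mul_one, hcard]
    have : (0:ℝ) < B.card := by exact_mod_cast Finset.card_pos.mpr hB
    exact div_self this.ne'
  obtain ⟨s, hs⟩ := uE_ne hne
  apply hs
  have := hconst s
  rw [hq0, hq, div_eq_one_iff_eq (uE_pos hB s).ne'] at this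
  exact this

lemma PP_zero_nowhere {A B : Finset ℝ} (hB : B.Nonempty)
    (hcard : A.card = B.card) (hne : A ≠ B) :
    IsClosed {s : ℝ | PP A B s = 0} ∧ interior {s : ℝ | PP A B s = 0} = ∅ := by
  have hcont : Continuous (PP A B) := by
    rw [← continuousOn_univ]
    exact (analytic_PP A B).continuousOn
  constructor
  · exact isClosed_eq hcont continuous_const
  · by_contra hi
    obtain ⟨x, hx⟩ := Set.nonempty_iff_ne_empty.mpr hi
    have hnhds : {s : ℝ | PP A B s = 0} ∈ 𝓝 x := mem_interior_iff_mem_nhds.mp hx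
    have hev : PP A B =ᶠ[𝓝 x] 0 := eventually_of_mem hnhds (fun y hy => hy)
    have := (analytic_PP A B).eqOn_zero_of_preconnected_of_eventuallyEq_zero
      isPreconnected_univ (Set.mem_univ x) hev
    obtain ⟨s, hs⟩ := PP_ne hB hcard hne
    exact hs (this (Set.mem_univ s))

lemma interior_union_empty {s t : Set ℝ} (hs : IsClosed s) (hsi : interior s = ∅)
    (hti : interior t = ∅) : interior (s ∪ t) = ∅ := by
  have h1 : interior (s ∪ t) \ s ⊆ interior t := by
    apply interior_maximal
    · intro x hx
      rcases (interior_subset hx.1 : x ∈ s ∪ t) with h | h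
      · exact absurd h hx.2
      · exact h
    · exact isOpen_interior.sdiff hs
  rw [hti, Set.subset_empty_iff, Set.diff_eq_empty] at h1
  have h2 : interior (s ∪ t) ⊆ interior s := interior_maximal h1 isOpen_interior
  rw [hsi, Set.subset_empty_iff] at h2
  exact h2

lemma exists_avoid {ι : Type*} [DecidableEq ι] (s : Finset ι) (Z : ι → Set ℝ)
    (h : ∀ p ∈ s, IsClosed (Z p) ∧ interior (Z p) = ∅) :
    ∃ t : ℝ, ∀ p ∈ s, t ∉ Z p := by
  have key : IsClosed (⋃ p ∈ s, Z p) ∧ interior (⋃ p ∈ s, Z p) = ∅ := by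
    induction s using Finset.induction with
    | empty => simp
    | @insert a s ha ih =>
      rw [Finset.set_biUnion_insert]
      have hih := ih (fun p hp => h p (Finset.mem_insert_of_mem hp))
      have ha' := h a (Finset.mem_insert_self a s)
      exact ⟨ha'.1.union hih.1, interior_union_empty ha'.1 ha'.2 hih.2⟩
  have hne : (⋃ p ∈ s, Z p) ≠ Set.univ := by
    intro hu
    have := key.2
    rw [hu, interior_univ] at this
    exact (Set.univ_nonempty.ne_empty) this
  obtain ⟨t, ht⟩ := Set.ne_univ_iff_exists_notMem _ |>.mp hne
  exact ⟨t, fun p hp hmem => ht (Set.mem_biUnion hp hmem)⟩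

end Helpers


/-- The `k`-th column of a `d × n` matrix, viewed as a vector of `EuclideanSpace ℝ (Fin d)`
(so that `‖·‖` is the Euclidean norm). -/
noncomputable def col {d n : ℕ} (Z : Matrix (Fin d) (Fin n) ℝ) (k : Fin n) :
    EuclideanSpace ℝ (Fin d) := WithLp.toLp 2 (fun a => Z a k)

/-- Single-head masked (causal) softmax self-attention with head size `1`. -/
noncomputable def FSA {d n : ℕ}
    (WO : Matrix (Fin d) (Fin 1) ℝ) (WV WK WQ : Matrix (Fin 1) (Fin d) ℝ)
    (Z : Matrix (Fin d) (Fin n) ℝ) : Matrix (Fin d) (Fin n) ℝ :=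
  fun a k => Z a k + WO a 0 *
    ∑ l ∈ univ.filter (fun l => l ≤ k),
      (Real.exp ((WK * Z) 0 l * (WQ * Z) 0 k) /
          ∑ l' ∈ univ.filter (fun l' => l' ≤ k), Real.exp ((WK * Z) 0 l' * (WQ * Z) 0 k)) *
        (WV * Z) 0 l

/-- A two-layer ReLU feed-forward network `x ↦ W² σ_R(W¹ x + b¹) + b²` of hidden width `w`. -/
noncomputable def FFN {d K w : ℕ} (W1 : Matrix (Fin w) (Fin d) ℝ) (b1 : Fin w → ℝ)
    (W2 : Matrix (Fin K) (Fin w) ℝ) (b2 : Fin K → ℝ) (x : Fin d → ℝ) : Fin K → ℝ :=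
  W2.mulVec (fun j => max ((W1.mulVec x + b1) j) 0) + b2

/-- Softmax on `ℝ^K`. -/
noncomputable def softmax {K : ℕ} (z : Fin K → ℝ) : Fin K → ℝ :=
  fun i => Real.exp (z i) / ∑ j, Real.exp (z j)


noncomputable def dotv {d : ℕ} (a : Fin d → ℝ) (x : EuclideanSpace ℝ (Fin d)) : ℝ :=
  ∑ b, a b * x b

lemma FSA_last {d n : ℕ} (hn : 2 ≤ n) (a : Fin d → ℝ) (t ε : ℝ)
    (X : Matrix (Fin d) (Fin n) ℝ) (b : Fin d) :
    FSA (fun b _ => ε * a b) (fun _ b => a b) (fun _ b => a b) (fun _ b => t * a b) X b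
        ⟨n - 1, by omega⟩ =
      X b ⟨n - 1, by omega⟩ + (ε * a b) *
        ((∑ l, Real.exp (dotv a (col X l) * (t * dotv a (col X ⟨n - 1, by omega⟩))) *
            dotv a (col X l)) /
         (∑ l, Real.exp (dotv a (col X l) * (t * dotv a (col X ⟨n - 1, by omega⟩))))) := by
  have hfilter : (univ.filter (fun l : Fin n => l ≤ (⟨n - 1, by omega⟩ : Fin n))) = univ := by
    apply Finset.filter_true_of_mem
    intro l _
    have hl := l.2
    rw [Fin.le_def]
    simp only []
    omega
  have harg : (∑ j, t * a j * X j (⟨n - 1, by omega⟩ : Fin n)) =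
      t * ∑ j, a j * X j (⟨n - 1, by omega⟩ : Fin n) := by
    rw [Finset.mul_sum]
    apply Finset.sum_congr rfl
    intro x _
    ring
  simp only [FSA, hfilter]
  congr 1
  simp only [Matrix.mul_apply, dotv, col]
  simp only [Matrix.mul_apply (M := (fun _ b => a b : Matrix (Fin 1) (Fin d) ℝ)),
    Matrix.mul_apply (M := (fun _ b => t * a b : Matrix (Fin 1) (Fin d) ℝ))]
  rw [harg, Finset.sum_div]
  congr 1
  apply Finset.sum_congr rfl
  intro l _
  rw [div_mul_eq_mul_div]

/-- A one-block Transformer — a single-head masked softmax attention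
layer followed by a two-layer ReLU network of hidden width at most `(2M + d)|V|` and a
softmax readout on the last column — exactly memorizes the `M` history–distribution
pairs `(X^(i), p^(i))`. -/
theorem transformer_memorization {d n M : ℕ} (hn : 2 ≤ n) (hd : 1 ≤ d)
    (V : Finset (EuclideanSpace ℝ (Fin d)))
    (r_min r_max η : ℝ) (hrmin : 0 < r_min)
    (hV1 : ∀ v ∈ V, r_min < ‖v‖ ∧ ‖v‖ < r_max)
    (hV2 : ∀ v ∈ V, ∀ v' ∈ V, v ≠ v' → η < ‖v - v'‖)
    (X : Fin M → Matrix (Fin d) (Fin n) ℝ)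
    (p : Fin M → Fin V.card → ℝ)
    (hcols : ∀ i k, col (X i) k ∈ V)
    (hnodup : ∀ i, ∀ k l : Fin n, k ≠ l → col (X i) k ≠ col (X i) l)
    (hdistinct : ∀ i j : Fin M, i ≠ j → Set.range (col (X i)) ≠ Set.range (col (X j)))
    (hp0 : ∀ i v, 0 < p i v) (hp1 : ∀ i, ∑ v, p i v = 1) :
    ∃ (WO : Matrix (Fin d) (Fin 1) ℝ) (WV WK WQ : Matrix (Fin 1) (Fin d) ℝ)
      (w : ℕ) (_ : w ≤ (2 * M + d) * V.card)
      (W1 : Matrix (Fin w) (Fin d) ℝ) (b1 : Fin w → ℝ)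
      (W2 : Matrix (Fin V.card) (Fin w) ℝ) (b2 : Fin V.card → ℝ),
      ∀ i : Fin M,
        softmax (FFN W1 b1 W2 b2
            (col (FSA WO WV WK WQ (X i)) ⟨n - 1, by omega⟩)) = p i := by
  classical
  rcases Nat.eq_zero_or_pos M with hM | hM
  · subst hM
    exact ⟨0, 0, 0, 0, 0, Nat.zero_le _, 0, 0, 0, 0, fun i => i.elim0⟩
  have hn1 : n - 1 < n := by omega
  set nlast : Fin n := ⟨n - 1, hn1⟩ with hnl
  have hVne : V.Nonempty := ⟨_, hcols ⟨0, hM⟩ nlast⟩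
  have hV0 : ∀ v ∈ V, v ≠ (0 : EuclideanSpace ℝ (Fin d)) := by
    intro v hv h0
    have := (hV1 v hv).1
    rw [h0, norm_zero] at this
    linarith
  -- Step 1 : a separating functional on V
  obtain ⟨a, ha⟩ := exists_functional' (d := d)
    (T := ((V ×ˢ V).filter (fun pq => pq.1 ≠ pq.2)) ∪
      (V.image (fun v => (v, (0 : EuclideanSpace ℝ (Fin d))))))
    (v := fun pq => fun b => pq.1 b - pq.2 b)
    (by
      intro q hq
      rcases Finset.mem_union.mp hq with h | h
      · obtain ⟨hmem, hne⟩ := Finset.mem_filter.mp h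
        intro hc
        apply hne
        ext b
        have := congrFun hc b
        simpa [sub_eq_zero] using this
      · obtain ⟨v, hv, rfl⟩ := Finset.mem_image.mp h
        intro hc
        apply hV0 v hv
        ext b
        have := congrFun hc b
        simpa [sub_eq_zero] using this)
  have ha1 : ∀ v ∈ V, ∀ v' ∈ V, v ≠ v' → dotv a v ≠ dotv a v' := by
    intro v hv v' hv' hne heq
    apply ha (v, v') (Finset.mem_union_left _
      (Finset.mem_filter.mpr ⟨Finset.mem_product.mpr ⟨hv, hv'⟩, hne⟩))
    have : (∑ b, a b * (v b - v' b)) = dotv a v - dotv a v' := by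
      rw [dotv, dotv, ← Finset.sum_sub_distrib]
      apply Finset.sum_congr rfl
      intro x _
      ring
    rw [this, heq, sub_self]
  have ha2 : ∀ v ∈ V, dotv a v ≠ 0 := by
    intro v hv heq
    apply ha (v, (0 : EuclideanSpace ℝ (Fin d)))
      (Finset.mem_union_right _ (Finset.mem_image.mpr ⟨v, hv, rfl⟩))
    rw [← heq, dotv]
    apply Finset.sum_congr rfl
    intro x _
    show a x * (v x - (0:ℝ)) = a x * v x
    ring
  -- Step 2 : column sets and their dot-images
  have hcolinj : ∀ i : Fin M, Function.Injective (col (X i)) := by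
    intro i k l h
    by_contra hkl
    exact hnodup i k l hkl h
  set S : Fin M → Finset (EuclideanSpace ℝ (Fin d)) := fun i => univ.image (col (X i)) with hS
  have hSsubV : ∀ i, S i ⊆ V := by
    intro i x hx
    obtain ⟨k, _, rfl⟩ := Finset.mem_image.mp hx
    exact hcols i k
  have hSne : ∀ i j, i ≠ j → S i ≠ S j := by
    intro i j hij heq
    apply hdistinct i j hij
    have h1 : ((S i : Set (EuclideanSpace ℝ (Fin d)))) = (S j : Set _) := by rw [heq]
    simpa [hS, Finset.coe_image, Set.image_univ] using h1
  set A : Fin M → Finset ℝ := fun i => (S i).image (dotv a) with hA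
  have hAcard : ∀ i, (A i).card = n := by
    intro i
    rw [hA]
    rw [Finset.card_image_of_injOn (fun x hx y hy hxy => by
      by_contra hne
      exact ha1 x (hSsubV i hx) y (hSsubV i hy) hne hxy)]
    rw [hS]
    rw [Finset.card_image_of_injective _ (hcolinj i), Finset.card_univ, Fintype.card_fin]
  have hAne : ∀ i, (A i).Nonempty := by
    intro i
    refine ⟨dotv a (col (X i) nlast), ?_⟩
    rw [hA]
    exact Finset.mem_image.mpr ⟨_, Finset.mem_image.mpr ⟨nlast, Finset.mem_univ _, rfl⟩, rfl⟩
  have hstep : ∀ i j : Fin M, A i = A j → S i ⊆ S j := by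
    intro i j heq x hx
    have hxA : dotv a x ∈ A j := by
      rw [← heq, hA]
      exact Finset.mem_image.mpr ⟨x, hx, rfl⟩
    obtain ⟨y, hy, hxy⟩ := Finset.mem_image.mp hxA
    have hxy' : x = y := by
      by_contra hne
      exact ha1 x (hSsubV i hx) y (hSsubV j hy) hne hxy.symm
    rw [hxy']
    exact hy
  have hAneq : ∀ i j, i ≠ j → A i ≠ A j := by
    intro i j hij heq
    exact hSne i j hij (Finset.Subset.antisymm (hstep i j heq) (hstep j i heq.symm))
  -- Step 3 : choice of t
  set β : Fin M → ℝ := fun i => dotv a (col (X i) nlast) with hβ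
  have hβne : ∀ i, β i ≠ 0 := fun i => ha2 _ (hcols i nlast)
  set Pb : Finset (Fin M × Fin M) := univ.filter
    (fun q => q.1 ≠ q.2 ∧ col (X q.1) nlast = col (X q.2) nlast) with hPb
  obtain ⟨t, ht⟩ := exists_avoid Pb
    (fun q => {s : ℝ | PP (A q.1) (A q.2) (s * β q.1) = 0})
    (by
      intro q hq
      obtain ⟨-, hne, -⟩ := Finset.mem_filter.mp hq
      have hnowhere := PP_zero_nowhere (hAne q.2)
        ((hAcard q.1).trans (hAcard q.2).symm) (hAneq _ _ hne)
      have hpre : {s : ℝ | PP (A q.1) (A q.2) (s * β q.1) = 0}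
          = (fun s : ℝ => s * β q.1) ⁻¹' {s : ℝ | PP (A q.1) (A q.2) s = 0} := rfl
      refine ⟨?_, ?_⟩
      · show IsClosed {s : ℝ | PP (A q.1) (A q.2) (s * β q.1) = 0}
        rw [hpre]
        exact hnowhere.1.preimage (continuous_id.mul continuous_const)
      · show interior {s : ℝ | PP (A q.1) (A q.2) (s * β q.1) = 0} = ∅
        have hhom : (fun s : ℝ => s * β q.1)
            = (Homeomorph.mulRight₀ (β q.1) (hβne q.1) : ℝ → ℝ) := rfl
        rw [hpre, hhom, ← Homeomorph.preimage_interior, hnowhere.2, Set.preimage_empty])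
  -- Step 4 : attention outputs
  set c : Fin M → ℝ := fun i => (∑ l, Real.exp (dotv a (col (X i) l) * (t * β i)) *
      dotv a (col (X i) l)) / (∑ l, Real.exp (dotv a (col (X i) l) * (t * β i))) with hc
  have hcuE : ∀ i, c i = nE (A i) (t * β i) / uE (A i) (t * β i) := by
    intro i
    have hinj : ∀ x ∈ (univ : Finset (Fin n)), ∀ y ∈ univ,
        dotv a (col (X i) x) = dotv a (col (X i) y) → x = y := by
      intro x _ y _ hxy
      by_contra hne
      exact ha1 _ (hcols i x) _ (hcols i y) (fun hc' => hnodup i x y hne hc') hxy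
    have hAeq : A i = Finset.image (fun l => dotv a (col (X i) l)) univ := by
      simp only [hA, hS, Finset.image_image]
      rfl
    have h1 : nE (A i) (t * β i)
        = ∑ l, dotv a (col (X i) l) * Real.exp ((t * β i) * dotv a (col (X i) l)) := by
      rw [nE, hAeq, Finset.sum_image hinj]
    have h2 : uE (A i) (t * β i) = ∑ l, Real.exp ((t * β i) * dotv a (col (X i) l)) := by
      rw [uE, hAeq, Finset.sum_image hinj]
    rw [h1, h2]
    simp only [hc]
    congr 1
    · apply Finset.sum_congr rfl
      intro l _
      rw [mul_comm (t * β i) (dotv a (col (X i) l))]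
      ring
    · apply Finset.sum_congr rfl
      intro l _
      rw [mul_comm (t * β i) (dotv a (col (X i) l))]
  have hcne : ∀ i j, i ≠ j → col (X i) nlast = col (X j) nlast → c i ≠ c j := by
    intro i j hij hcol heq
    have hq : (i, j) ∈ Pb := Finset.mem_filter.mpr ⟨Finset.mem_univ _, hij, hcol⟩
    apply ht (i, j) hq
    show PP (A i) (A j) (t * β i) = 0
    have hβij : β j = β i := by rw [hβ]; simp only []; rw [hcol]
    rw [hcuE, hcuE, hβij] at heq
    have h1 := uE_pos (hAne i) (t * β i)
    have h2 := uE_pos (hAne j) (t * β i)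
    rw [div_eq_div_iff h1.ne' h2.ne'] at heq
    rw [PP, heq]
    ring
  -- Step 5 : bounds and ε
  have hMne : (univ : Finset (Fin M)).Nonempty := ⟨⟨0, hM⟩, Finset.mem_univ _⟩
  obtain ⟨Cb0, hCb0⟩ := Finite.exists_le (fun i : Fin M => |c i|)
  set Cb : ℝ := |Cb0| + 1 with hCb
  have hCble : ∀ i, |c i| ≤ Cb := by
    intro i
    have h1 := hCb0 i
    have h2 := le_abs_self Cb0
    rw [hCb]
    linarith
  have hCbpos : 0 < Cb := by
    have := abs_nonneg Cb0
    rw [hCb]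
    linarith
  set avec : EuclideanSpace ℝ (Fin d) := WithLp.toLp 2 (fun b => a b) with havec
  set Gd : Finset ℝ := insert 1 ((univ.filter
      (fun q : Fin M × Fin M => col (X q.1) nlast ≠ col (X q.2) nlast)).image
      (fun q => ‖col (X q.1) nlast - col (X q.2) nlast‖)) with hGd
  have hGdne : Gd.Nonempty := ⟨1, Finset.mem_insert_self _ _⟩
  set δV : ℝ := Gd.min' hGdne with hδV
  have hδVpos : 0 < δV := by
    have hall : ∀ x ∈ Gd, 0 < x := by
      intro x hx
      rw [hGd] at hx
      rcases Finset.mem_insert.mp hx with h | h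
      · rw [h]; norm_num
      · obtain ⟨q, hq, rfl⟩ := Finset.mem_image.mp h
        have hne := (Finset.mem_filter.mp hq).2
        exact norm_pos_iff.mpr (sub_ne_zero.mpr hne)
    exact hall _ (Gd.min'_mem hGdne)
  have hδVle : ∀ i j : Fin M, col (X i) nlast ≠ col (X j) nlast →
      δV ≤ ‖col (X i) nlast - col (X j) nlast‖ := by
    intro i j h
    apply Gd.min'_le
    rw [hGd]
    exact Finset.mem_insert_of_mem (Finset.mem_image.mpr
      ⟨(i, j), Finset.mem_filter.mpr ⟨Finset.mem_univ _, h⟩, rfl⟩)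
  set ε : ℝ := δV / (2 * Cb * (‖avec‖ + 1)) with hε
  have hεpos : 0 < ε := by
    rw [hε]
    apply div_pos hδVpos
    have := norm_nonneg avec
    positivity
  -- Step 6 : the attention layer output is z
  set z : Fin M → EuclideanSpace ℝ (Fin d) := fun i =>
    col (FSA (fun b _ => ε * a b) (fun _ b => a b) (fun _ b => a b) (fun _ b => t * a b)
      (X i)) ⟨n - 1, by omega⟩ with hz
  have hzb : ∀ i b, z i b = X i b nlast + (ε * a b) * c i := by
    intro i b
    rw [hz]
    show FSA (fun b _ => ε * a b) (fun _ b => a b) (fun _ b => a b) (fun _ b => t * a b)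
      (X i) b ⟨n - 1, by omega⟩ = _
    rw [FSA_last hn a t ε (X i) b, hc]
  have hzne : ∀ i j, i ≠ j → z i ≠ z j := by
    intro i j hij heq
    by_cases hcol : col (X i) nlast = col (X j) nlast
    · have hci := hcne i j hij hcol
      have hab : ∀ b, a b = 0 := by
        intro b
        have h1 := congrFun (congrArg WithLp.ofLp heq) b
        rw [hzb, hzb] at h1
        have h2 : X i b nlast = X j b nlast := congrFun (congrArg WithLp.ofLp hcol) b
        have h3 : (ε * a b) * c i = (ε * a b) * c j := by linarith
        rcases mul_eq_mul_left_iff.mp h3 with h | h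
        · exact absurd h hci
        · rcases mul_eq_zero.mp h with h' | h'
          · exact absurd h' hεpos.ne'
          · exact h'
      obtain ⟨v0, hv0⟩ := hVne
      apply ha2 v0 hv0
      rw [dotv]
      apply Finset.sum_eq_zero
      intro x _
      rw [hab x, zero_mul]
    · have h4 : col (X i) nlast - col (X j) nlast = (ε * (c j - c i)) • avec := by
        ext b
        have h1 := congrFun (congrArg WithLp.ofLp heq) b
        rw [hzb, hzb] at h1
        show X i b nlast - X j b nlast = (ε * (c j - c i)) * a b
        have h5 : X i b nlast - X j b nlast = (ε * a b) * c j - (ε * a b) * c i := by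
          linarith
        rw [h5]
        ring
      have h5 := hδVle i j hcol
      rw [h4, norm_smul, Real.norm_eq_abs] at h5
      have h6 : |ε * (c j - c i)| ≤ ε * (2 * Cb) := by
        rw [abs_mul, abs_of_pos hεpos]
        apply mul_le_mul_of_nonneg_left _ hεpos.le
        calc |c j - c i| ≤ |c j| + |c i| := abs_sub _ _
        _ ≤ Cb + Cb := add_le_add (hCble j) (hCble i)
        _ = 2 * Cb := by ring
      have h7 : ε * (2 * Cb) * ‖avec‖ < δV := by
        rw [hε, div_mul_eq_mul_div, div_mul_eq_mul_div, div_lt_iff₀ (by positivity)]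
        have hna : (0:ℝ) ≤ ‖avec‖ := norm_nonneg _
        nlinarith [hδVpos]
      have h8 : |ε * (c j - c i)| * ‖avec‖ ≤ ε * (2 * Cb) * ‖avec‖ :=
        mul_le_mul_of_nonneg_right h6 (norm_nonneg _)
      linarith
  -- Step 7 : second separating functional
  obtain ⟨a2, ha2'⟩ := exists_functional' (d := d)
    (T := (univ : Finset (Fin M × Fin M)).filter (fun q => q.1 ≠ q.2))
    (v := fun q => fun b => z q.1 b - z q.2 b)
    (by
      intro q hq
      have hne := (Finset.mem_filter.mp hq).2
      intro hc'
      apply hzne q.1 q.2 hne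
      ext b
      have := congrFun hc' b
      simpa [sub_eq_zero] using this)
  set sv : Fin M → ℝ := fun i => ∑ b, a2 b * z i b with hsv
  have hsvinj : Function.Injective sv := by
    intro i j hij
    by_contra hne
    apply ha2' (i, j) (Finset.mem_filter.mpr ⟨Finset.mem_univ _, hne⟩)
    have heq2 : (∑ b, a2 b * (z i b - z j b)) = sv i - sv j := by
      rw [hsv, ← Finset.sum_sub_distrib]
      apply Finset.sum_congr rfl
      intro x _
      ring
    rw [heq2, hij, sub_self]
  -- Step 8 : interpolation
  obtain ⟨tv, W, hW⟩ := relu_interp sv hsvinj (fun i v => Real.log (p i v))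
  have hVcard : 1 ≤ V.card := Finset.card_pos.mpr hVne
  have hwle : M ≤ (2 * M + d) * V.card := by
    calc M ≤ (2 * M + d) * 1 := by omega
    _ ≤ (2 * M + d) * V.card := Nat.mul_le_mul_left _ hVcard
  refine ⟨(fun b _ => ε * a b), (fun _ b => a b), (fun _ b => a b), (fun _ b => t * a b),
    M, hwle, (fun _ b => a2 b), (fun j => -(tv j)), (fun v j => W v j), 0, ?_⟩
  intro i
  have hffn : ∀ v', FFN (fun _ b => a2 b) (fun j => -(tv j)) (fun v j => W v j) 0
      (col (FSA (fun b _ => ε * a b) (fun _ b => a b) (fun _ b => a b) (fun _ b => t * a b)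
        (X i)) ⟨n - 1, by omega⟩) v' = Real.log (p i v') := by
    intro v'
    have hcoleq : col (FSA (fun b _ => ε * a b) (fun _ b => a b) (fun _ b => a b)
        (fun _ b => t * a b) (X i)) ⟨n - 1, by omega⟩ = z i := rfl
    rw [hcoleq, ← hW i v']
    simp only [FFN, Matrix.mulVec, dotProduct, Pi.add_apply, Pi.zero_apply, add_zero]
    apply Finset.sum_congr rfl
    intro j _
    have hsvi : sv i = ∑ x, a2 x * z i x := by rw [hsv]
    rw [hsvi, sub_eq_add_neg]
  funext v
  simp only [softmax, hffn]
  rw [Real.exp_log (hp0 i v)]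
  rw [Finset.sum_congr rfl (fun u _ => Real.exp_log (hp0 i u)), hp1 i, div_one]
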